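/- Let m ≥ 1 be an integer, 0 ≤ q < 1 a real number, and D ∈ ℕ. Then Σ_{K ∈ ℕᵐ, |K| ≥ D} q^{|K|} ≤ (D+1)^{m−1} · q^D / (1 − q)^m (in particular the family is summable). -/

import Mathlib

set_option maxHeartbeats 1000000

open Finset

lemma geom_pi (q : ℝ) (hq0 : 0 ≤ q) (hq1 : q < 1) :
    ∀ m : ℕ, Summable (fun B : Fin m → ℕ => q ^ ∑ i, B i) ∧
      ∑' B : Fin m → ℕ, q ^ ∑ i, B i = (1 - q)⁻¹ ^ m := by
  intro m
  induction m with
  | zero =>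
    constructor
    · exact Summable.of_finite
    · simp
  | succ m ih =>
    obtain ⟨ihs, iht⟩ := ih
    have hgeo : Summable (fun n : ℕ => q ^ n) := summable_geometric_of_lt_one hq0 hq1
    set F : ℕ × (Fin m → ℕ) → ℝ := fun p => q ^ p.1 * q ^ ∑ i, p.2 i with hFdef
    have hF : Summable F :=
      Summable.mul_of_nonneg (f := fun n : ℕ => q ^ n)
        (g := fun B : Fin m → ℕ => q ^ ∑ i, B i) hgeo ihs
        (fun n => pow_nonneg hq0 n) (fun B => pow_nonneg hq0 _)
    set e : (Fin (m + 1) → ℕ) ≃ ℕ × (Fin m → ℕ) := (Fin.consEquiv fun _ => ℕ).symm with hedef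
    have hcomp : (fun B : Fin (m + 1) → ℕ => q ^ ∑ i, B i) = F ∘ e := by
      funext B
      simp only [hedef, hFdef, Function.comp_apply, Fin.consEquiv, Equiv.coe_fn_symm_mk, Fin.sum_univ_succ,
        pow_add]
      rfl
    have hsum2 : Summable (fun B : Fin (m + 1) → ℕ => q ^ ∑ i, B i) := by
      rw [hcomp]; exact hF.comp_injective e.injective
    refine ⟨hsum2, ?_⟩
    have h1 : ∑' B : Fin (m + 1) → ℕ, q ^ ∑ i, B i = ∑' p, F p := by
      rw [hcomp]; exact e.tsum_eq F
    have h2 : ∑' p, F p = ∑' (n : ℕ) (B : Fin m → ℕ), q ^ n * q ^ ∑ i, B i :=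
      Summable.tsum_prod' hF (fun n => ihs.mul_left (q ^ n))
    rw [h1, h2]
    have h3 : ∀ n : ℕ, (∑' B : Fin m → ℕ, q ^ n * q ^ ∑ i, B i) = q ^ n * (1 - q)⁻¹ ^ m := by
      intro n; rw [tsum_mul_left, iht]
    simp_rw [h3]
    rw [tsum_mul_right, tsum_geometric_of_lt_one hq0 hq1, pow_succ']

/-- Geometric tail estimate over multi-indices (core of Lemma 4.2 of the paper):
for `0 ≤ q < 1` and `D ∈ ℕ`, the family `(q^{|K|})_{K ∈ ℕᵐ, |K| ≥ D}` is summable and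
`Σ_{|K| ≥ D} q^{|K|} ≤ (D+1)^{m−1} q^D / (1 − q)^m`. -/
theorem stmt_11 (m : ℕ) (hm : 1 ≤ m) (q : ℝ) (hq0 : 0 ≤ q) (hq1 : q < 1) (D : ℕ) :
    Summable (fun K : {K : Fin m → ℕ // D ≤ ∑ i, K i} => q ^ (∑ i, K.1 i)) ∧
      ∑' K : {K : Fin m → ℕ // D ≤ ∑ i, K i}, q ^ (∑ i, K.1 i) ≤
        ((D : ℝ) + 1) ^ (m - 1) * q ^ D / (1 - q) ^ m := by
  obtain ⟨n, rfl⟩ : ∃ n, m = n + 1 := ⟨m - 1, (Nat.succ_pred_eq_of_pos hm).symm⟩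
  -- prefix sums and greedy decomposition
  set m := n + 1 with hmdef
  -- K' extends K : Fin m → ℕ to ℕ → ℕ
  let ext : (Fin m → ℕ) → ℕ → ℕ := fun K j => if h : j < m then K ⟨j, h⟩ else 0
  let P : (Fin m → ℕ) → ℕ → ℕ := fun K t => ∑ j ∈ range t, ext K j
  let A : (Fin m → ℕ) → Fin m → ℕ := fun K i => min (P K (i + 1)) D - min (P K i) D
  have hPmono : ∀ K, Monotone (fun t => min (P K t) D) := by
    intro K
    have hP : Monotone (P K) := by
      intro a b hab
      exact Finset.sum_le_sum_of_subset (Finset.range_subset_range.2 hab)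
    exact hP.min monotone_const
  -- total sum equals P K m
  have htot : ∀ K : Fin m → ℕ, ∑ i, K i = P K m := by
    intro K
    rw [show (∑ i, K i) = ∑ i : Fin m, ext K i by
      apply Finset.sum_congr rfl; intro i _; simp [ext, i.isLt]]
    exact Fin.sum_univ_eq_sum_range (ext K) m
  -- sum of A is min (total) D
  have hAsum : ∀ K : Fin m → ℕ, ∑ i, A K i = min (P K m) D - min (P K 0) D := by
    intro K
    have := Finset.sum_range_tsub (f := fun t => min (P K t) D) (hPmono K) m
    rw [← this]
    exact Fin.sum_univ_eq_sum_range (fun j => min (P K (j + 1)) D - min (P K j) D) m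
  have hP0 : ∀ K : Fin m → ℕ, P K 0 = 0 := by intro K; simp [P]
  have hAsumD : ∀ K : Fin m → ℕ, D ≤ ∑ i, K i → ∑ i, A K i = D := by
    intro K hK
    rw [hAsum, hP0]
    have : D ≤ P K m := by rw [← htot]; exact hK
    omega
  have hPsucc : ∀ (K : Fin m → ℕ) (i : Fin m), P K (i + 1) = P K i + K i := by
    intro K i
    simp only [P, Finset.sum_range_succ]
    congr 1
    simp [ext, i.isLt]
  have hAle : ∀ (K : Fin m → ℕ) (i : Fin m), A K i ≤ K i := by
    intro K i
    simp only [A]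
    rw [hPsucc]
    omega
  have hAleD : ∀ (K : Fin m → ℕ) (i : Fin m), A K i ≤ D := by
    intro K i
    simp only [A]
    omega
  -- the injection
  let ψ : {K : Fin m → ℕ // D ≤ ∑ i, K i} → (Fin n → Fin (D + 1)) × (Fin m → ℕ) :=
    fun K => (fun i => ⟨A K.1 i.castSucc, Nat.lt_succ_of_le (hAleD K.1 i.castSucc)⟩,
      fun i => K.1 i - A K.1 i)
  have hψinj : Function.Injective ψ := by
    intro K L hKL
    obtain ⟨h1, h2⟩ := Prod.ext_iff.1 hKL
    have hAcast : ∀ i : Fin n, A K.1 i.castSucc = A L.1 i.castSucc := by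
      intro i
      have := congrFun h1 i
      exact congrArg Fin.val this
    have hAeq : A K.1 = A L.1 := by
      funext i
      induction i using Fin.lastCases with
      | last =>
        have hK' := hAsumD K.1 K.2
        have hL' := hAsumD L.1 L.2
        rw [Fin.sum_univ_castSucc] at hK' hL'
        have : ∑ i : Fin n, A K.1 i.castSucc = ∑ i : Fin n, A L.1 i.castSucc :=
          Finset.sum_congr rfl fun i _ => hAcast i
        omega
      | cast i => exact hAcast i
    apply Subtype.ext
    funext i
    have hB := congrFun h2 i
    have h3 := hAle K.1 i
    have h4 := hAle L.1 i
    have h5 := congrFun hAeq i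
    simp only [ψ] at hB
    omega
  -- the dominating function on the product
  let g : (Fin n → Fin (D + 1)) × (Fin m → ℕ) → ℝ := fun p => q ^ D * q ^ ∑ i, p.2 i
  have hval : ∀ K : {K : Fin m → ℕ // D ≤ ∑ i, K i}, q ^ (∑ i, K.1 i) = g (ψ K) := by
    intro K
    simp only [g, ψ, ← pow_add]
    congr 1
    have : ∑ i, (K.1 i - A K.1 i) = ∑ i, K.1 i - ∑ i, A K.1 i := by
      rw [eq_comm, Nat.sub_eq_iff_eq_add (Finset.sum_le_sum fun i _ => hAle K.1 i),
        ← Finset.sum_add_distrib]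
      apply Finset.sum_congr rfl
      intro i _
      have := hAle K.1 i
      omega
    rw [this, hAsumD K.1 K.2]
    have hD : D ≤ ∑ i, K.1 i := K.2
    omega
  obtain ⟨hgs0, hgt0⟩ := geom_pi q hq0 hq1 m
  have hgsum : Summable g := by
    have hc : Summable (fun _ : Fin n → Fin (D + 1) => q ^ D) := Summable.of_finite
    exact Summable.mul_of_nonneg (f := fun _ : Fin n → Fin (D + 1) => q ^ D)
      (g := fun B : Fin m → ℕ => q ^ ∑ i, B i) hc hgs0
      (fun _ => pow_nonneg hq0 _) (fun _ => pow_nonneg hq0 _)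
  have hfsum : Summable (fun K : {K : Fin m → ℕ // D ≤ ∑ i, K i} => q ^ (∑ i, K.1 i)) := by
    have : (fun K : {K : Fin m → ℕ // D ≤ ∑ i, K i} => q ^ (∑ i, K.1 i)) = g ∘ ψ := funext hval
    rw [this]
    exact hgsum.comp_injective hψinj
  refine ⟨hfsum, ?_⟩
  have hle : ∑' K : {K : Fin m → ℕ // D ≤ ∑ i, K i}, q ^ (∑ i, K.1 i) ≤ ∑' p, g p :=
    Summable.tsum_le_tsum_of_inj ψ hψinj
      (fun c _ => mul_nonneg (pow_nonneg hq0 _) (pow_nonneg hq0 _))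
      (fun K => le_of_eq (hval K)) hfsum hgsum
  have hgt : ∑' p, g p = ((D : ℝ) + 1) ^ n * (q ^ D * (1 - q)⁻¹ ^ m) := by
    rw [Summable.tsum_prod' hgsum (fun _ => hgs0.mul_left (q ^ D))]
    have h1 : ∀ x : Fin n → Fin (D + 1),
        (∑' B : Fin m → ℕ, q ^ D * q ^ ∑ i, B i) = q ^ D * (1 - q)⁻¹ ^ m := by
      intro x
      rw [tsum_mul_left, hgt0]
    simp_rw [g]
    simp_rw [h1 (fun _ => 0)]
    rw [tsum_fintype, Finset.sum_const, Finset.card_univ]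
    simp only [Fintype.card_pi, Fintype.card_fin, Finset.prod_const, Finset.card_univ,
      nsmul_eq_mul]
    push_cast
    ring
  refine hle.trans (le_of_eq ?_)
  rw [hgt]
  have h1q : (0:ℝ) < 1 - q := by linarith
  rw [show m - 1 = n from rfl]
  rw [div_eq_mul_inv, ← inv_pow]
  ring
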